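/- (Winding-number constraint for cylindric path families) Let $m, n, k \geq 1$ with $k \le n$. In the cylindric network $\widehat{\Lambda}_{m,n}$ (the wrap-around of the infinite grid network with $n$ horizontal lines on a cylinder and $m$ columns of crossing vertices), suppose $\mathcal{F}$ is a non-intersecting family of highway paths from sources $B = \{b_k < \cdots < b_1\} \subseteq [n]$ to sinks $C = \{c_k < \cdots < c_1\} \subseteq [n]$ with total winding number $d$. Then the path starting at source $b_a$ must end at sink $c_{((a+d-1) \bmod k) + 1}$; that is, the winding number together with the source and sink sets determines the connection pattern, which is the cyclic rotation by $d$. -/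

import Mathlib

/-- A highway path on the cylindric network `Λ̂_{m,n}` is encoded by its starting row
`b : ZMod n` and the set `D ⊆ [m]` of interior columns in which it makes its (unique)
vertical step.  `entryRow n b D g` is the row of the path at the horizontal gap `g`
(just before interior column `g`, for `0 ≤ g ≤ m`): the start row minus the number of
descents already made. -/
def entryRow (n : ℕ) (b : ZMod n) {m : ℕ} (D : Finset (Fin m)) (g : ℕ) : ZMod n :=
  b - (((D.filter fun t : Fin m => (t : ℕ) < g).card : ℕ) : ZMod n)

/-- The winding number of the highway path `(b, D)`: the number of vertical steps that
cross the distinguished chord, i.e. descents from row `0` to row `n - 1`. -/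
def windingNum (n : ℕ) (b : ZMod n) {m : ℕ} (D : Finset (Fin m)) : ℕ :=
  (D.filter fun t : Fin m => entryRow n b D (t : ℕ) = 0).card

lemma filt_succ {m : ℕ} (D : Finset (Fin m)) (p : Fin m → Prop) [DecidablePred p] (g : ℕ) :
    (D.filter fun t : Fin m => (t : ℕ) < g + 1 ∧ p t).card
      = (D.filter fun t : Fin m => (t : ℕ) < g ∧ p t).card
        + if h : ∃ hg : g < m, (⟨g, hg⟩ : Fin m) ∈ D ∧ p ⟨g, hg⟩ then 1 else 0 := by
  by_cases h : ∃ hg : g < m, (⟨g, hg⟩ : Fin m) ∈ D ∧ p ⟨g, hg⟩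
  · obtain ⟨hg, hD, hp⟩ := h
    rw [dif_pos ⟨hg, hD, hp⟩]
    have : (D.filter fun t : Fin m => (t : ℕ) < g + 1 ∧ p t)
        = insert ⟨g, hg⟩ (D.filter fun t : Fin m => (t : ℕ) < g ∧ p t) := by
      ext t
      simp only [Finset.mem_filter, Finset.mem_insert, Nat.lt_succ_iff_lt_or_eq]
      constructor
      · rintro ⟨htD, hlt | heq, hpt⟩
        · exact Or.inr ⟨htD, hlt, hpt⟩
        · exact Or.inl (Fin.ext heq)
      · rintro (rfl | ⟨htD, hlt, hpt⟩)
        · exact ⟨hD, Or.inr rfl, hp⟩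
        · exact ⟨htD, Or.inl hlt, hpt⟩
    rw [this, Finset.card_insert_of_notMem (by simp)]
  · rw [dif_neg h, Nat.add_zero]
    congr 1
    apply Finset.filter_congr
    intro t htD
    constructor
    · rintro ⟨hlt, hpt⟩
      rcases Nat.lt_succ_iff_lt_or_eq.1 hlt with hlt' | heq
      · exact ⟨hlt', hpt⟩
      · exfalso
        apply h
        refine ⟨heq ▸ t.isLt, ?_⟩
        rw [show (⟨g, heq ▸ t.isLt⟩ : Fin m) = t from (Fin.ext heq.symm)]
        exact ⟨htD, hpt⟩
    · rintro ⟨hlt, hpt⟩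
      exact ⟨Nat.lt_succ_of_lt hlt, hpt⟩

lemma filt_succ' {m : ℕ} (D : Finset (Fin m)) (g : ℕ) :
    (D.filter fun t : Fin m => (t : ℕ) < g + 1).card
      = (D.filter fun t : Fin m => (t : ℕ) < g).card
        + if h : ∃ hg : g < m, (⟨g, hg⟩ : Fin m) ∈ D then 1 else 0 := by
  have := filt_succ D (fun _ => True) g
  simpa using this

lemma entryRow_cast (n : ℕ) {m : ℕ} (B : ℕ) (D : Finset (Fin m)) (g : ℕ) :
    entryRow n (B : ZMod n) D g
      = ((((B : ℤ) - (D.filter fun t : Fin m => (t : ℕ) < g).card : ℤ)) : ZMod n) := by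
  unfold entryRow; push_cast; ring

lemma int_eq_zero_of {n : ℕ} {Y : ℤ} (h0 : 0 ≤ Y) (h1 : Y < n) (hd : (n : ℤ) ∣ Y) : Y = 0 := by
  have h2 := Int.emod_eq_of_lt h0 h1
  have h3 := Int.emod_emod_of_dvd Y (dvd_refl (n : ℤ))
  omega

lemma cast_Y_eq (n : ℕ) {m : ℕ} (B : ℕ) (D : Finset (Fin m)) (g W : ℕ) :
    ((((B : ℤ) - (D.filter fun t : Fin m => (t : ℕ) < g).card + n * W : ℤ)) : ZMod n)
      = entryRow n (B : ZMod n) D g := by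
  rw [entryRow_cast]
  push_cast
  simp [ZMod.natCast_self]


lemma row_lift {n : ℕ} [NeZero n] {m : ℕ} (B : ℕ) (hB : B < n) (D : Finset (Fin m)) (g : ℕ) :
    0 ≤ (B : ℤ) - (D.filter fun t : Fin m => (t : ℕ) < g).card
        + n * (D.filter fun t : Fin m =>
            (t : ℕ) < g ∧ entryRow n (B : ZMod n) D (t : ℕ) = 0).card
    ∧ (B : ℤ) - (D.filter fun t : Fin m => (t : ℕ) < g).card
        + n * (D.filter fun t : Fin m =>
            (t : ℕ) < g ∧ entryRow n (B : ZMod n) D (t : ℕ) = 0).card < n := by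
  have hn : 1 ≤ (n : ℤ) := by exact_mod_cast Nat.one_le_iff_ne_zero.2 (NeZero.ne n)
  have hB' : (B : ℤ) < n := by exact_mod_cast hB
  induction g with
  | zero =>
    simp only [Nat.not_lt_zero, false_and, Finset.filter_false, Finset.card_empty]
    constructor
    · simp
    · simpa using hB'
  | succ g ih =>
    have hYcast : ((((B : ℤ) - (D.filter fun t : Fin m => (t : ℕ) < g).card
        + n * (D.filter fun t : Fin m =>
            (t : ℕ) < g ∧ entryRow n (B : ZMod n) D (t : ℕ) = 0).card : ℤ)) : ZMod n)
        = entryRow n (B : ZMod n) D g := cast_Y_eq n B D g _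
    rw [filt_succ' D g, filt_succ D (fun t : Fin m => entryRow n (B : ZMod n) D (t : ℕ) = 0) g]
    by_cases hmem : ∃ hg : g < m, (⟨g, hg⟩ : Fin m) ∈ D
    · rw [dif_pos hmem]
      by_cases hzero : entryRow n (B : ZMod n) D g = 0
      · have hY0 : (B : ℤ) - (D.filter fun t : Fin m => (t : ℕ) < g).card
            + n * (D.filter fun t : Fin m =>
                (t : ℕ) < g ∧ entryRow n (B : ZMod n) D (t : ℕ) = 0).card = 0 := by
          apply int_eq_zero_of ih.1 ih.2
          rw [← ZMod.intCast_zmod_eq_zero_iff_dvd, hYcast]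
          exact hzero
        rw [dif_pos ⟨hmem.1, hmem.2, hzero⟩]
        set L := (D.filter fun t : Fin m => (t : ℕ) < g).card with hLdef
        set W := (D.filter fun t : Fin m =>
            (t : ℕ) < g ∧ entryRow n (B : ZMod n) D (t : ℕ) = 0).card with hWdef
        push_cast
        rw [mul_add, mul_one]
        set P : ℤ := (n : ℤ) * (W : ℤ) with hPdef
        omega
      · have hYne : (B : ℤ) - (D.filter fun t : Fin m => (t : ℕ) < g).card
            + n * (D.filter fun t : Fin m =>
                (t : ℕ) < g ∧ entryRow n (B : ZMod n) D (t : ℕ) = 0).card ≠ 0 := by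
          intro h
          apply hzero
          rw [← hYcast, h]
          simp
        rw [dif_neg (by rintro ⟨h1, h2, h3⟩; exact hzero h3)]
        obtain ⟨ih1, ih2⟩ := ih
        set L := (D.filter fun t : Fin m => (t : ℕ) < g).card with hLdef
        set W := (D.filter fun t : Fin m =>
            (t : ℕ) < g ∧ entryRow n (B : ZMod n) D (t : ℕ) = 0).card with hWdef
        push_cast
        rw [add_zero]
        set P : ℤ := (n : ℤ) * (W : ℤ) with hPdef
        omega
    · rw [dif_neg hmem, dif_neg (by rintro ⟨h1, h2, h3⟩; exact hmem ⟨h1, h2⟩)]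
      simpa using ih

lemma end_row {n : ℕ} [NeZero n] {m : ℕ} (B : ℕ) (hB : B < n) (D : Finset (Fin m)) :
    0 ≤ (B : ℤ) - D.card + n * windingNum n (B : ZMod n) D
    ∧ (B : ℤ) - D.card + n * windingNum n (B : ZMod n) D < n := by
  have h := row_lift B hB D m
  have h1 : D.filter (fun t : Fin m => (t : ℕ) < m) = D :=
    Finset.filter_true_of_mem fun t _ => t.isLt
  have h2 : (D.filter fun t : Fin m =>
      (t : ℕ) < m ∧ entryRow n (B : ZMod n) D (t : ℕ) = 0)
      = D.filter fun t : Fin m => entryRow n (B : ZMod n) D (t : ℕ) = 0 :=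
    Finset.filter_congr fun t _ => by simp [t.isLt]
  rw [h1, h2] at h
  exact h

lemma noncross {n : ℕ} [NeZero n] {m : ℕ} (B B' : ℕ) (D D' : Finset (Fin m))
    (h0 : 0 < (B : ℤ) - B') (h1 : (B : ℤ) - B' < n)
    (hdisj : ∀ g : ℕ, g ≤ m → entryRow n (B : ZMod n) D g ≠ entryRow n (B' : ZMod n) D' g) :
    ∀ g : ℕ, g ≤ m →
      0 < ((B : ℤ) - (D.filter fun t : Fin m => (t : ℕ) < g).card)
          - ((B' : ℤ) - (D'.filter fun t : Fin m => (t : ℕ) < g).card)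
      ∧ ((B : ℤ) - (D.filter fun t : Fin m => (t : ℕ) < g).card)
          - ((B' : ℤ) - (D'.filter fun t : Fin m => (t : ℕ) < g).card) < n := by
  intro g
  induction g with
  | zero =>
    intro _
    simp only [Nat.not_lt_zero, Finset.filter_false, Finset.card_empty]
    constructor
    · simpa using h0
    · simpa using h1
  | succ g ih =>
    intro hle
    have ihg := ih (Nat.le_of_succ_le hle)
    have hZcast : ((((B : ℤ) - (D.filter fun t : Fin m => (t : ℕ) < g + 1).card)
        - ((B' : ℤ) - (D'.filter fun t : Fin m => (t : ℕ) < g + 1).card) : ℤ) : ZMod n)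
        = entryRow n (B : ZMod n) D (g + 1) - entryRow n (B' : ZMod n) D' (g + 1) := by
      rw [entryRow_cast, entryRow_cast]
      push_cast
      ring
    have hZnd : ¬ ((n : ℤ) ∣ (((B : ℤ) - (D.filter fun t : Fin m => (t : ℕ) < g + 1).card)
        - ((B' : ℤ) - (D'.filter fun t : Fin m => (t : ℕ) < g + 1).card))) := by
      intro hd
      apply hdisj (g + 1) hle
      have := (ZMod.intCast_zmod_eq_zero_iff_dvd _ n).2 hd
      rw [hZcast] at this
      exact sub_eq_zero.1 this
    have hZ0 : (((B : ℤ) - (D.filter fun t : Fin m => (t : ℕ) < g + 1).card)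
        - ((B' : ℤ) - (D'.filter fun t : Fin m => (t : ℕ) < g + 1).card)) ≠ 0 :=
      fun h => hZnd (h ▸ dvd_zero _)
    have hZn : (((B : ℤ) - (D.filter fun t : Fin m => (t : ℕ) < g + 1).card)
        - ((B' : ℤ) - (D'.filter fun t : Fin m => (t : ℕ) < g + 1).card)) ≠ (n : ℤ) :=
      fun h => hZnd (h ▸ dvd_refl _)
    rw [filt_succ' D g, filt_succ' D' g] at hZ0 hZn ⊢
    split_ifs at hZ0 hZn ⊢ <;> push_cast at hZ0 hZn ⊢ <;> omega

lemma card_filter_lt_fin {k : ℕ} (v : Fin k) :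
    (Finset.univ.filter fun x : Fin k => x < v).card = (v : ℕ) := by
  have h : (Finset.univ.filter fun x : Fin k => x < v) = Finset.Iio v := by
    ext x; simp
  rw [h, Fin.card_Iio]

lemma rotation_of_classes {k : ℕ} (hk : 1 ≤ k) (w : Fin k → ℕ) (σ : Equiv.Perm (Fin k))
    (key : ∀ a a' : Fin k, a < a' →
      (w a' = w a ∧ σ a < σ a') ∨ (w a' = w a + 1 ∧ σ a' < σ a)) :
    ∀ a : Fin k, (σ a : ℕ) = ((a : ℕ) + ∑ x : Fin k, w x) % k := by
  classical
  set a0 : Fin k := ⟨0, hk⟩ with ha0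
  have hmono : ∀ a a' : Fin k, a ≤ a' → w a ≤ w a' ∧ w a' ≤ w a + 1 := by
    intro a a' h
    rcases eq_or_lt_of_le h with rfl | h
    · omega
    · rcases key a a' h with ⟨h1, _⟩ | ⟨h1, _⟩ <;> omega
  set S : Finset (Fin k) := Finset.univ.filter (fun x => w a0 < w x) with hS
  set q : ℕ := S.card with hq
  have ha0le : ∀ x : Fin k, a0 ≤ x := fun x => by
    rw [Fin.le_def]; exact Nat.zero_le _
  have hin : ∀ x : Fin k, x ∈ S ↔ w x = w a0 + 1 := by
    intro x
    have h := hmono a0 x (ha0le x)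
    simp only [hS, Finset.mem_filter, Finset.mem_univ, true_and]
    omega
  have hnotin : ∀ x : Fin k, x ∉ S ↔ w x = w a0 := by
    intro x
    have h := hmono a0 x (ha0le x)
    simp only [hS, Finset.mem_filter, Finset.mem_univ, true_and]
    omega
  -- order facts
  have horder1 : ∀ x y : Fin k, x < y → (x ∈ S ↔ y ∈ S) → σ x < σ y := by
    intro x y hxy hiff
    rcases key x y hxy with ⟨_, h2⟩ | ⟨h1, h2⟩
    · exact h2
    · exfalso
      have hy : y ∈ S := (hin y).2 (by
        have := (hmono a0 x (ha0le x)); have := (hmono a0 y (ha0le y)); omega)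
      have hx : x ∉ S := (hnotin x).2 (by
        have := (hmono a0 x (ha0le x)); have := (hmono a0 y (ha0le y)); omega)
      exact hx (hiff.2 hy)
  have horder2 : ∀ x y : Fin k, x < y → x ∉ S → y ∈ S → σ y < σ x := by
    intro x y hxy hx hy
    rcases key x y hxy with ⟨h1, h2⟩ | ⟨_, h2⟩
    · exfalso
      rw [hnotin] at hx; rw [hin] at hy; omega
    · exact h2
  -- value of σ a as a count
  have hsigma : ∀ a : Fin k, (σ a : ℕ) = (Finset.univ.filter fun x => σ x < σ a).card := by
    intro a
    rw [← card_filter_lt_fin (σ a)]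
    symm
    apply Finset.card_bij' (fun x _ => σ x) (fun y _ => σ.symm y)
    · intro x hx
      simpa using (Finset.mem_filter.1 hx).2
    · intro y hy
      simp only [Finset.mem_filter, Finset.mem_univ, true_and, Equiv.apply_symm_apply]
      simpa using (Finset.mem_filter.1 hy).2
    · intro x _; simp
    · intro y _; simp
  -- the sum of winding numbers
  have hsum : ∑ x : Fin k, w x = q + w a0 * k := by
    have hpt : ∀ x : Fin k, w x = (if x ∈ S then 1 else 0) + w a0 := by
      intro x
      by_cases h : x ∈ S
      · rw [if_pos h]; rw [hin] at h; omega
      · rw [if_neg h]; rw [hnotin] at h; omega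
    rw [Finset.sum_congr rfl fun x _ => hpt x, Finset.sum_add_distrib,
      Finset.sum_const, Finset.sum_boole]
    simp only [smul_eq_mul, Finset.card_univ, Fintype.card_fin, Nat.cast_id]
    have hfS : Finset.univ.filter (fun x => x ∈ S) = S := by ext x; simp
    rw [hfS, mul_comm]
  have hmod : ∀ a : Fin k, ((a : ℕ) + ∑ x : Fin k, w x) % k = ((a : ℕ) + q) % k := by
    intro a
    rw [hsum, ← Nat.add_assoc, Nat.add_mul_mod_self_right]
  intro a
  rw [hmod a]
  by_cases haS : a ∈ S
  · -- σ a = a + q - k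
    have h1 : (Finset.univ.filter fun x => σ x < σ a) = S.filter (· < a) := by
      ext x
      simp only [Finset.mem_filter, Finset.mem_univ, true_and]
      constructor
      · intro hx
        rcases lt_trichotomy x a with h | rfl | h
        · refine ⟨?_, h⟩
          by_contra hxS
          exact absurd hx (asymm (horder2 x a h hxS haS))
        · exact absurd hx (lt_irrefl _)
        · exfalso
          have hxin : x ∈ S := (hin x).2 (by
            have := hmono a x (le_of_lt h); rw [hin] at haS
            have := (hmono a0 x (ha0le x)); omega)
          exact absurd hx (asymm (horder1 a x h (iff_of_true haS hxin)))
      · rintro ⟨hxS, hxa⟩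
        exact horder1 x a hxa (iff_of_true hxS haS)
    have h2 : S.filter (fun x => ¬ x < a) = Finset.univ.filter (fun x => a ≤ x) := by
      ext x
      simp only [Finset.mem_filter, Finset.mem_univ, true_and, not_lt]
      constructor
      · rintro ⟨_, h⟩; exact h
      · intro h
        refine ⟨(hin x).2 ?_, h⟩
        have := hmono a x h; rw [hin] at haS
        have := (hmono a0 x (ha0le x)); omega
    have h3 := Finset.card_filter_add_card_filter_not (s := S) (p := fun x => x < a)
    have h4 := Finset.card_filter_add_card_filter_not
      (s := (Finset.univ : Finset (Fin k))) (p := fun x => x < a)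
    have h5 : (Finset.univ.filter fun x : Fin k => ¬ x < a)
        = Finset.univ.filter fun x : Fin k => a ≤ x := by
      ext x; simp [not_lt]
    rw [h2] at h3
    rw [h5, card_filter_lt_fin a, Finset.card_univ, Fintype.card_fin] at h4
    -- h3 : (S.filter (·<a)).card + (univ.filter (a ≤ ·)).card = q
    -- h4 : a + (univ.filter (a ≤ ·)).card = k
    have hak : (a : ℕ) < k := a.isLt
    have hqk : q ≤ k := by
      rw [hq]; exact (Finset.card_le_univ S).trans (by simp)
    have hval : (σ a : ℕ) = (a : ℕ) + q - k := by
      rw [hsigma a, h1]; omega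
    have hk2 : k ≤ (a : ℕ) + q := by omega
    rw [hval, Nat.mod_eq_sub_mod hk2, Nat.mod_eq_of_lt (by omega)]
  · -- σ a = a + q
    have h1 : (Finset.univ.filter fun x => σ x < σ a)
        = (Finset.univ.filter fun x => x < a) ∪ S := by
      ext x
      simp only [Finset.mem_union, Finset.mem_filter, Finset.mem_univ, true_and]
      constructor
      · intro hx
        rcases lt_trichotomy x a with h | rfl | h
        · exact Or.inl h
        · exact absurd hx (lt_irrefl _)
        · right
          by_contra hxS
          exact absurd hx (asymm (horder1 a x h (iff_of_false haS hxS)))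
      · rintro (h | hxS)
        · have hxn : x ∉ S := by
            rw [hnotin]
            have := hmono x a (le_of_lt h); rw [hnotin] at haS
            have := (hmono a0 x (ha0le x)); omega
          exact horder1 x a h (iff_of_false hxn haS)
        · have hax : a < x := by
            rcases lt_trichotomy x a with h | rfl | h
            · exfalso
              have := hmono x a (le_of_lt h); rw [hnotin] at haS; rw [hin] at hxS; omega
            · exact absurd hxS haS
            · exact h
          exact horder2 a x hax haS hxS
    have hdisj : Disjoint (Finset.univ.filter fun x : Fin k => x < a) S := by
      rw [Finset.disjoint_left]
      intro x hx hxS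
      simp only [Finset.mem_filter, Finset.mem_univ, true_and] at hx
      have := hmono x a (le_of_lt hx); rw [hnotin] at haS; rw [hin] at hxS; omega
    have hval : (σ a : ℕ) = (a : ℕ) + q := by
      rw [hsigma a, h1, Finset.card_union_of_disjoint hdisj, card_filter_lt_fin a]
    rw [hval, Nat.mod_eq_of_lt (hval ▸ (σ a).isLt)]


/-- Winding-number constraint for non-intersecting families of highway paths on the
cylinder: if `k` pairwise edge-disjoint highway paths connect the sources
`B = {b_k < ⋯ < b_1}` to the sinks `C = {c_k < ⋯ < c_1}` (0-indexed: `a ↦ b a`,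
strictly decreasing), and the family has total winding number `d`, then the path
starting at source `b a` ends at sink `c ((a + d) mod k)`: the connection pattern is
the cyclic rotation by `d`. -/
theorem cylindric_winding_matching (m n k : ℕ) [NeZero n]
    (hk : 1 ≤ k) (hkn : k ≤ n)
    (b c : Fin k → Fin n) (hb : StrictAnti b) (hc : StrictAnti c)
    (D : Fin k → Finset (Fin m)) (σ : Equiv.Perm (Fin k))
    -- the path starting at `b a` ends at the row of sink `c (σ a)`
    (hend : ∀ a : Fin k,
      (((b a : ℕ) : ZMod n)) - (((D a).card : ℕ) : ZMod n) = (((c (σ a) : ℕ)) : ZMod n))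
    -- no two paths share a horizontal edge
    (hdisjH : ∀ a a' : Fin k, a ≠ a' → ∀ g : ℕ, g ≤ m →
      entryRow n ((b a : ℕ) : ZMod n) (D a) g ≠ entryRow n ((b a' : ℕ) : ZMod n) (D a') g)
    -- no two paths share a vertical edge
    (hdisjV : ∀ a a' : Fin k, a ≠ a' → ∀ t : Fin m, t ∈ D a → t ∈ D a' →
      entryRow n ((b a : ℕ) : ZMod n) (D a) (t : ℕ)
        ≠ entryRow n ((b a' : ℕ) : ZMod n) (D a') (t : ℕ)) :
    ∀ a : Fin k, (σ a : ℕ) =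
      ((a : ℕ) + ∑ a' : Fin k, windingNum n ((b a' : ℕ) : ZMod n) (D a')) % k := by
  have hn0 : (0 : ℤ) < n := by exact_mod_cast Nat.pos_of_ne_zero (NeZero.ne n)
  -- endpoint identity over ℤ
  have hC : ∀ a : Fin k, ((c (σ a) : ℕ) : ℤ)
      = ((b a : ℕ) : ℤ) - (D a).card + n * windingNum n ((b a : ℕ) : ZMod n) (D a) := by
    intro a
    obtain ⟨h0, h1⟩ := end_row (b a : ℕ) (b a).isLt (D a)
    have hcast : (((((b a : ℕ) : ℤ) - (D a).card
        + n * windingNum n ((b a : ℕ) : ZMod n) (D a) : ℤ)) : ZMod n)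
        = ((c (σ a) : ℕ) : ZMod n) := by
      rw [← hend a]
      push_cast
      simp [ZMod.natCast_self]
    have hdvd : (n : ℤ) ∣ (((b a : ℕ) : ℤ) - (D a).card
        + n * windingNum n ((b a : ℕ) : ZMod n) (D a) - ((c (σ a) : ℕ) : ℤ)) := by
      rw [← ZMod.intCast_zmod_eq_zero_iff_dvd]
      push_cast
      push_cast at hcast
      rw [sub_eq_zero]
      exact hcast
    have hc1 : ((c (σ a) : ℕ) : ℤ) < n := by exact_mod_cast (c (σ a)).isLt
    have hc0 : (0 : ℤ) ≤ ((c (σ a) : ℕ) : ℤ) := Int.natCast_nonneg _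
    obtain ⟨j, hj⟩ := hdvd
    have hjlt : j < 1 := by nlinarith
    have hjgt : -1 < j := by nlinarith
    have hj0 : j = 0 := by omega
    rw [hj0, mul_zero] at hj
    linarith
  -- pair property
  have key : ∀ a a' : Fin k, a < a' →
      (windingNum n ((b a' : ℕ) : ZMod n) (D a')
          = windingNum n ((b a : ℕ) : ZMod n) (D a) ∧ σ a < σ a')
      ∨ (windingNum n ((b a' : ℕ) : ZMod n) (D a')
          = windingNum n ((b a : ℕ) : ZMod n) (D a) + 1 ∧ σ a' < σ a) := by
    intro a a' haa
    have hb' : ((b a' : ℕ) : ℤ) < ((b a : ℕ) : ℤ) := by exact_mod_cast hb haa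
    have hban : ((b a : ℕ) : ℤ) < n := by exact_mod_cast (b a).isLt
    have hba0 : (0 : ℤ) ≤ ((b a' : ℕ) : ℤ) := Int.natCast_nonneg _
    have hnc := noncross (b a : ℕ) (b a' : ℕ) (D a) (D a')
      (by linarith) (by linarith)
      (fun g hg => hdisjH a a' (ne_of_lt haa) g hg) m le_rfl
    have hfa : (D a).filter (fun t : Fin m => (t : ℕ) < m) = D a :=
      Finset.filter_true_of_mem fun t _ => t.isLt
    have hfa' : (D a').filter (fun t : Fin m => (t : ℕ) < m) = D a' :=
      Finset.filter_true_of_mem fun t _ => t.isLt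
    rw [hfa, hfa'] at hnc
    obtain ⟨hnc1, hnc2⟩ := hnc
    have ea : ((b a : ℕ) : ℤ) - (D a).card
        = ((c (σ a) : ℕ) : ℤ) - n * windingNum n ((b a : ℕ) : ZMod n) (D a) := by
      have := hC a; linarith
    have ea' : ((b a' : ℕ) : ℤ) - (D a').card
        = ((c (σ a') : ℕ) : ℤ) - n * windingNum n ((b a' : ℕ) : ZMod n) (D a') := by
      have := hC a'; linarith
    rw [ea, ea'] at hnc1 hnc2
    have hca1 : ((c (σ a) : ℕ) : ℤ) < n := by exact_mod_cast (c (σ a)).isLt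
    have hca0 : (0 : ℤ) ≤ ((c (σ a) : ℕ) : ℤ) := Int.natCast_nonneg _
    have hca1' : ((c (σ a') : ℕ) : ℤ) < n := by exact_mod_cast (c (σ a')).isLt
    have hca0' : (0 : ℤ) ≤ ((c (σ a') : ℕ) : ℤ) := Int.natCast_nonneg _
    set wa : ℤ := (windingNum n ((b a : ℕ) : ZMod n) (D a) : ℤ) with hwa
    set wa' : ℤ := (windingNum n ((b a' : ℕ) : ZMod n) (D a') : ℤ) with hwa'
    have hu0 : 0 ≤ wa' - wa := by nlinarith
    have hu1 : wa' - wa ≤ 1 := by nlinarith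
    have hcases : wa' = wa ∨ wa' = wa + 1 := by omega
    rcases hcases with hcase | hcase
    · left
      constructor
      · rw [hwa, hwa'] at hcase; exact_mod_cast hcase
      · have hcc : ((c (σ a') : ℕ) : ℤ) < ((c (σ a) : ℕ) : ℤ) := by
          rw [hcase] at hnc1; linarith
        have hcc' : c (σ a') < c (σ a) := by
          rw [Fin.lt_def]; exact_mod_cast hcc
        exact hc.lt_iff_gt.mp hcc'
    · right
      constructor
      · rw [hwa, hwa'] at hcase; exact_mod_cast hcase
      · have hcc : ((c (σ a) : ℕ) : ℤ) < ((c (σ a') : ℕ) : ℤ) := by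
          rw [hcase] at hnc2; linarith
        have hcc' : c (σ a) < c (σ a') := by
          rw [Fin.lt_def]; exact_mod_cast hcc
        exact hc.lt_iff_gt.mp hcc'
  exact rotation_of_classes hk
    (fun x => windingNum n ((b x : ℕ) : ZMod n) (D x)) σ key
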